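/- Let E be a finite-dimensional normed real vector space, n ≥ 2, and G_1,…,G_n closed convex subsets of E such that the union ⋃_i G_i is convex and for each j there exists y_j ∈ ⋂_{i≠j} G_i. Then ⋂_{i=1}^n G_i ≠ ∅. -/

import Mathlib

open Metric

/-- Convexity of the distance-to-a-convex-set function, in the form used below. -/
lemma infDist_combo_le {E : Type*} [NormedAddCommGroup E] [NormedSpace ℝ E]
    {G : Set E} (hG : Convex ℝ G) (hne : G.Nonempty) {a b : E} {s t : ℝ}
    (hs : 0 ≤ s) (ht : 0 ≤ t) (hst : s + t = 1) :
    infDist (s • a + t • b) G ≤ s * infDist a G + t * infDist b G := by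
  refine le_of_forall_pos_le_add fun ε hε => ?_
  obtain ⟨x, hxG, hx⟩ := (infDist_lt_iff hne).mp
    (lt_add_of_pos_right (infDist a G) hε)
  obtain ⟨x', hx'G, hx'⟩ := (infDist_lt_iff hne).mp
    (lt_add_of_pos_right (infDist b G) hε)
  have hmem : s • x + t • x' ∈ G := hG hxG hx'G hs ht hst
  have hdist : dist (s • a + t • b) (s • x + t • x') ≤ s * dist a x + t * dist b x' := by
    have : s • a + t • b - (s • x + t • x') = s • (a - x) + t • (b - x') := by
      module
    rw [dist_eq_norm, this]
    calc ‖s • (a - x) + t • (b - x')‖ ≤ ‖s • (a - x)‖ + ‖t • (b - x')‖ := norm_add_le _ _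
      _ = s * dist a x + t * dist b x' := by
          rw [norm_smul, norm_smul, Real.norm_of_nonneg hs, Real.norm_of_nonneg ht,
            dist_eq_norm, dist_eq_norm]
  calc infDist (s • a + t • b) G ≤ dist (s • a + t • b) (s • x + t • x') :=
        infDist_le_dist_of_mem hmem
    _ ≤ s * dist a x + t * dist b x' := hdist
    _ ≤ s * (infDist a G + ε) + t * (infDist b G + ε) := by
        gcongr
    _ = s * infDist a G + t * infDist b G + ε := by nlinarith [hst]

/-- Inductive step of the elementary proof of the convex KKM principle:
if `G₁, …, Gₙ` (`n ≥ 2`) are closed convex sets in a finite-dimensional normed real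
vector space whose union is convex and such that for each `j` some point lies in all
the `Gᵢ`, `i ≠ j`, then the `Gᵢ` have a common point. -/
theorem closed_convex_union_inter_nonempty {E : Type*} [NormedAddCommGroup E]
    [NormedSpace ℝ E] [FiniteDimensional ℝ E]
    (n : ℕ) (hn : 2 ≤ n) (G : Fin n → Set E)
    (hclosed : ∀ i, IsClosed (G i))
    (hconv : ∀ i, Convex ℝ (G i))
    (hunion : Convex ℝ (⋃ i, G i))
    (hy : ∀ j, ∃ y : E, ∀ i, i ≠ j → y ∈ G i) :
    (⋂ i, G i).Nonempty := by
  classical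
  haveI : Nontrivial (Fin n) := Fin.nontrivial_iff_two_le.mpr hn
  choose y hy' using hy
  have hGne : ∀ i, (G i).Nonempty := fun i => by
    obtain ⟨j, hj⟩ := exists_ne i
    exact ⟨y j, hy' j i (Ne.symm hj)⟩
  set K := convexHull ℝ (Set.range y) with hK
  have hKcomp : IsCompact K := (Set.finite_range y).isCompact_convexHull (𝕜 := ℝ)
  have hKconv : Convex ℝ K := convex_convexHull ℝ _
  have hyK : ∀ j, y j ∈ K := fun j => subset_convexHull ℝ _ (Set.mem_range_self j)
  have hKne : K.Nonempty := ⟨y (Classical.arbitrary _), hyK _⟩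
  have hKsub : K ⊆ ⋃ i, G i := by
    refine convexHull_min ?_ hunion
    rintro z ⟨j, rfl⟩
    obtain ⟨i, hi⟩ := exists_ne j
    exact Set.mem_iUnion.mpr ⟨i, hy' j i hi⟩
  have hune : (Finset.univ : Finset (Fin n)).Nonempty := Finset.univ_nonempty
  set f : E → ℝ := fun z => Finset.univ.sup' hune (fun i => infDist z (G i)) with hf
  have hfc : Continuous f :=
    Continuous.finset_sup'_apply hune fun i _ => continuous_infDist_pt (G i)
  obtain ⟨y₀, hy₀K, hmin⟩ := hKcomp.exists_isMinOn hKne hfc.continuousOn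
  have hle : ∀ i, infDist y₀ (G i) ≤ f y₀ := fun i =>
    Finset.le_sup' (fun i => infDist y₀ (G i)) (Finset.mem_univ i)
  have hm0 : f y₀ ≤ 0 := by
    by_contra hpos
    push_neg at hpos
    set m := f y₀ with hmdef
    obtain ⟨k, hk⟩ := Set.mem_iUnion.mp (hKsub hy₀K)
    set C := dist (y k) y₀ with hC
    have hC0 : 0 ≤ C := dist_nonneg
    set t : ℝ := min (1/2) (m / (2 * (C + 1))) with ht
    have ht0 : 0 < t := lt_min (by norm_num)
      (div_pos hpos (by positivity))
    have ht1 : t < 1 := lt_of_le_of_lt (min_le_left _ _) (by norm_num)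
    set z : E := (1 - t) • y₀ + t • y k with hz
    have hzK : z ∈ K := hKconv hy₀K (hyK k) (by linarith) ht0.le (by ring)
    have hzlt : ∀ i, infDist z (G i) < m := by
      intro i
      by_cases hik : i = k
      · have hk' : y₀ ∈ G i := by rw [hik]; exact hk
        have h1 : infDist z (G i) ≤ (1 - t) * infDist y₀ (G i) + t * infDist (y k) (G i) :=
          infDist_combo_le (hconv i) (hGne i) (by linarith) ht0.le (by ring)
        have h2 : infDist y₀ (G i) = 0 := infDist_zero_of_mem hk'
        have h3 : infDist (y k) (G i) ≤ C := infDist_le_dist_of_mem hk'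
        have htC : t * C < m := by
          have h4 : t ≤ m / (2 * (C + 1)) := min_le_right _ _
          have h5 : t * C ≤ m / (2 * (C + 1)) * C := by
            apply mul_le_mul_of_nonneg_right h4 hC0
          have h6 : m / (2 * (C + 1)) * C < m := by
            rw [div_mul_eq_mul_div, div_lt_iff₀ (by positivity)]
            nlinarith
          linarith
        calc infDist z (G i) ≤ (1 - t) * 0 + t * infDist (y k) (G i) := by
              rw [← h2]; exact h1
          _ ≤ t * C := by nlinarith [infDist_nonneg (x := y k) (s := G i)]
          _ < m := htC
      · have h1 : infDist z (G i) ≤ (1 - t) * infDist y₀ (G i) + t * infDist (y k) (G i) :=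
          infDist_combo_le (hconv i) (hGne i) (by linarith) ht0.le (by ring)
        have h2 : infDist (y k) (G i) = 0 := infDist_zero_of_mem (hy' k i hik)
        have h3 : infDist y₀ (G i) ≤ m := hle i
        calc infDist z (G i) ≤ (1 - t) * infDist y₀ (G i) := by rw [h2] at h1; linarith
          _ ≤ (1 - t) * m := by nlinarith [infDist_nonneg (x := y₀) (s := G i)]
          _ < m := by nlinarith
    have : f z < m := Finset.sup'_lt_iff hune |>.mpr fun i _ => hzlt i
    exact absurd (hmin hzK) (not_le.mpr this)
  refine ⟨y₀, Set.mem_iInter.mpr fun i => ?_⟩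
  have : infDist y₀ (G i) = 0 :=
    le_antisymm ((hle i).trans hm0) infDist_nonneg
  exact ((hclosed i).mem_iff_infDist_zero (hGne i)).mpr this
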